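/- Let G₁ = [[I, (a/r)V],[rVᵀ, ε]] and G₂ = [[I, sV],[(b/s)Vᵀ, δ]] be (n+1)×(n+1) matrices, where V is the first standard basis column vector of 𝕂ⁿ, r, s ∈ 𝕂 nonzero, a, b, ε, δ ∈ 𝕂, and z = rs with z ∉ {0, -ab, -aδ, -bε}. Then the product G₁G₂ = [[F, X],[Yᵀ, η]] has invertible upper-left n×n block F, and satisfies YᵀF⁻¹X = (z + aδ)(z + bε)/(z + ab) and η = z + εδ. -/

import Mathlib

open Matrix

section aux
variable {𝕂 : Type*} [RCLike 𝕂] {n : ℕ}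

lemma VtV (hn : 0 < n) :
    (Matrix.of fun (i : Fin n) (_ : Fin 1) => if (i : ℕ) = 0 then (1:𝕂) else 0)ᵀ *
    (Matrix.of fun (i : Fin n) (_ : Fin 1) => if (i : ℕ) = 0 then (1:𝕂) else 0) = 1 := by
  ext i j
  rw [Matrix.mul_apply]
  rw [Finset.sum_eq_single (⟨0, hn⟩ : Fin n)]
  · simp [Matrix.one_apply, Subsingleton.elim i j]
  · intro k _ hk
    have : (k : ℕ) ≠ 0 := fun h => hk (Fin.ext h)
    simp [this]
  · simp

end aux

open Matrix in
theorem upsilon_of_product {𝕂 : Type*} [RCLike 𝕂] {n : ℕ} (hn : 0 < n)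
    (a b ε δ r s : 𝕂) (hr : r ≠ 0) (hs : s ≠ 0)
    (z : 𝕂) (hz : z = r * s)
    (hz0 : z ≠ 0) (hzab : z ≠ -(a * b)) (hzad : z ≠ -(a * δ)) (hzbe : z ≠ -(b * ε)) :
    let V : Matrix (Fin n) (Fin 1) 𝕂 := Matrix.of fun i _ => if (i : ℕ) = 0 then 1 else 0
    let G₁ : Matrix (Fin n ⊕ Fin 1) (Fin n ⊕ Fin 1) 𝕂 :=
      fromBlocks 1 ((a / r) • V) (r • Vᵀ) (ε • 1)
    let G₂ : Matrix (Fin n ⊕ Fin 1) (Fin n ⊕ Fin 1) 𝕂 :=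
      fromBlocks 1 (s • V) ((b / s) • Vᵀ) (δ • 1)
    IsUnit (G₁ * G₂).toBlocks₁₁ ∧
      (G₁ * G₂).toBlocks₂₁ * ((G₁ * G₂).toBlocks₁₁)⁻¹ * (G₁ * G₂).toBlocks₁₂ =
        ((z + a * δ) * (z + b * ε) / (z + a * b)) • 1 ∧
      (G₁ * G₂).toBlocks₂₂ = (z + ε * δ) • 1 := by
  intro V G₁ G₂
  have hVtV : Vᵀ * V = 1 := VtV hn
  set P : Matrix (Fin n) (Fin n) 𝕂 := V * Vᵀ with hP
  have hPP : P * P = P := by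
    rw [hP, Matrix.mul_assoc, ← Matrix.mul_assoc Vᵀ, hVtV, Matrix.one_mul]
  have hzabne : z + a * b ≠ 0 := fun h => hzab (by linear_combination h)
  -- the blocks
  have hF : (G₁ * G₂).toBlocks₁₁ = 1 + (a * b / z) • P := by
    simp only [G₁, G₂, fromBlocks_multiply, toBlocks_fromBlocks₁₁, Matrix.one_mul,
      Matrix.smul_mul, Matrix.mul_smul, smul_smul, hP]
    congr 1
    congr 1
    field_simp [hz]
    rw [hz]; ring
  have hX : (G₁ * G₂).toBlocks₁₂ = ((z + a * δ) / r) • V := by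
    simp only [G₁, G₂, fromBlocks_multiply, toBlocks_fromBlocks₁₂, Matrix.one_mul,
      Matrix.smul_mul, Matrix.mul_smul, smul_smul, Matrix.mul_one, ← add_smul]
    congr 1
    field_simp [hz]
    rw [hz]; ring
  have hY : (G₁ * G₂).toBlocks₂₁ = ((z + b * ε) / s) • Vᵀ := by
    simp only [G₁, G₂, fromBlocks_multiply, toBlocks_fromBlocks₂₁, Matrix.one_mul,
      Matrix.smul_mul, Matrix.mul_smul, smul_smul, Matrix.mul_one, ← add_smul]
    congr 1
    field_simp [hz]; rw [hz]
  -- inverse of F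
  set Fi : Matrix (Fin n) (Fin n) 𝕂 := 1 + (-(a * b) / (z + a * b)) • P with hFi
  have key : ∀ c d : 𝕂, (1 + c • P) * (1 + d • P) = 1 + (c + d + c * d) • P := by
    intro c d
    rw [Matrix.add_mul, Matrix.mul_add, Matrix.mul_add]
    simp only [Matrix.one_mul, Matrix.mul_one, Matrix.smul_mul, Matrix.mul_smul, smul_smul, hPP]
    rw [add_smul, add_smul, mul_comm d c]
    abel
  have hcd : a * b / z + -(a * b) / (z + a * b) + a * b / z * (-(a * b) / (z + a * b)) = 0 := by
    field_simp
    ring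
  have hdc : -(a * b) / (z + a * b) + a * b / z + -(a * b) / (z + a * b) * (a * b / z) = 0 := by
    field_simp
    ring
  have hFFi : (G₁ * G₂).toBlocks₁₁ * Fi = 1 := by
    rw [hF, hFi, key, hcd]; simp
  have hFiF : Fi * (G₁ * G₂).toBlocks₁₁ = 1 := by
    rw [hF, hFi, key, hdc]; simp
  have hUnit : IsUnit (G₁ * G₂).toBlocks₁₁ := ⟨⟨_, Fi, hFFi, hFiF⟩, rfl⟩
  have hInv : ((G₁ * G₂).toBlocks₁₁)⁻¹ = Fi := Matrix.inv_eq_right_inv hFFi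
  have hmid : ∀ e : 𝕂, Vᵀ * (1 + e • P) * V = (1 + e) • (1 : Matrix (Fin 1) (Fin 1) 𝕂) := by
    intro e
    rw [Matrix.mul_add, Matrix.mul_one, Matrix.mul_smul, hP, ← Matrix.mul_assoc, hVtV,
      Matrix.one_mul, Matrix.add_mul, Matrix.smul_mul, hVtV, add_smul, one_smul]
  refine ⟨hUnit, ?_, ?_⟩
  · rw [hInv, hY, hX, hFi, Matrix.smul_mul, Matrix.mul_smul, Matrix.smul_mul, hmid, smul_smul, smul_smul]
    congr 1
    have h2 : r * s + a * b ≠ 0 := by rw [← hz]; exact hzabne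
    field_simp [hz, h2]; rw [hz]; ring
  · simp only [G₁, G₂, fromBlocks_multiply, toBlocks_fromBlocks₂₂,
      Matrix.smul_mul, Matrix.mul_smul, smul_smul, Matrix.mul_one, hVtV]
    rw [← add_smul]
    congr 1
    rw [hz]
    ring
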